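/- arXiv:1108.2974 — 3 statements merged into one kernel-verified Lean document; each statement's English description precedes it below -/
import Mathlib

section
/- Let X be a finite tree and let every vertex v carry the bi-threshold function with thresholds k↑_v = 1 and k↓_v = d(v)+1, where d(v) is the degree of v. Then for every permutation π of the vertices, every periodic point of the SDS map F_π is a fixed point; that is, F_π only has fixed points as limit sets. -/
/-- `σ(x[v])`: the number of vertices in state `1` among `v` and its neighbors. -/
noncomputable def sigmaLoc {n : ℕ} (G : SimpleGraph (Fin n)) (x : Fin n → Bool) (v : Fin n) : ℕ :=
  {u : Fin n | G.Adj v u ∧ x u = true}.ncard + (if x v = true then 1 else 0)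

/-- The `X`-local bi-threshold function `F_v`: updates coordinate `v` of `x` by the
bi-threshold rule with up-threshold `kup v` and down-threshold `kdown v`, leaving all other
coordinates unchanged. -/
noncomputable def localStep {n : ℕ} (G : SimpleGraph (Fin n)) (kup kdown : Fin n → ℕ)
    (x : Fin n → Bool) (v : Fin n) : Fin n → Bool :=
  Function.update x v
    (if x v = true then (if sigmaLoc G x v < kdown v then false else true)
     else (if kup v ≤ sigmaLoc G x v then true else false))

/-- The sequential dynamical system map for the update sequence `l`:
apply the local functions `F_v` in the order given by `l`. -/
noncomputable def sdsMap {n : ℕ} (G : SimpleGraph (Fin n)) (kup kdown : Fin n → ℕ)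
    (l : List (Fin n)) (x : Fin n → Bool) : Fin n → Bool :=
  l.foldl (localStep G kup kdown) x

namespace SDSTree

open SimpleGraph

variable {n : ℕ}

noncomputable def kfun (G : SimpleGraph (Fin n)) : Fin n → ℕ := fun u => (G.neighborSet u).ncard + 1

lemma sdsMap_cons (G : SimpleGraph (Fin n)) (k k' : Fin n → ℕ) (v : Fin n) (l : List (Fin n))
    (x : Fin n → Bool) : sdsMap G k k' (v :: l) x = sdsMap G k k' l (localStep G k k' x v) := rfl

lemma sdsMap_append (G : SimpleGraph (Fin n)) (k k' : Fin n → ℕ) (l₁ l₂ : List (Fin n))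
    (x : Fin n → Bool) : sdsMap G k k' (l₁ ++ l₂) x = sdsMap G k k' l₂ (sdsMap G k k' l₁ x) := by
  simp [sdsMap, List.foldl_append]

lemma localStep_ne (G : SimpleGraph (Fin n)) (k k' : Fin n → ℕ) (x : Fin n → Bool) (v w : Fin n)
    (h : w ≠ v) : localStep G k k' x v w = x w := Function.update_of_ne h _ _

lemma sdsMap_not_mem (G : SimpleGraph (Fin n)) (k k' : Fin n → ℕ) (l : List (Fin n)) :
    ∀ (x : Fin n → Bool) (v : Fin n), v ∉ l → sdsMap G k k' l x v = x v := by
  induction l with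
  | nil => intro x v _; rfl
  | cons w t ih =>
      intro x v hv
      have h1 : v ∉ t := fun h => hv (List.mem_cons_of_mem _ h)
      have h2 : v ≠ w := fun h => hv (by rw [h]; exact List.mem_cons_self)
      rw [sdsMap_cons, ih _ v h1, localStep_ne _ _ _ _ _ _ h2]

lemma update_self' (x : Fin n → Bool) (v : Fin n) (b : Bool) (h : x v = b) :
    Function.update x v b = x := by subst h; exact Function.update_eq_self v x

lemma step_isolated (G : SimpleGraph (Fin n)) (v : Fin n) (h : ∀ w, ¬ G.Adj v w)
    (x : Fin n → Bool) : localStep G (fun _ => 1) (kfun G) x v = x := by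
  have hnb : G.neighborSet v = ∅ := by ext w; simp [h w]
  have hk : kfun G v = 1 := by simp [kfun, hnb]
  have hset : {u : Fin n | G.Adj v u ∧ x u = true} = ∅ := by ext w; simp [h w]
  unfold localStep
  rw [hk]
  cases hxv : x v with
  | false =>
      have hσ : sigmaLoc G x v = 0 := by simp [sigmaLoc, hset, hxv]
      rw [hσ]
      norm_num
      exact hxv
  | true =>
      have hσ : sigmaLoc G x v = 1 := by simp [sigmaLoc, hset, hxv]
      rw [hσ]
      norm_num
      exact hxv

lemma sds_isolated_pres (G : SimpleGraph (Fin n)) (v : Fin n) (h : ∀ w, ¬ G.Adj v w)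
    (l : List (Fin n)) : ∀ x : Fin n → Bool, sdsMap G (fun _ => 1) (kfun G) l x v = x v := by
  induction l with
  | nil => intro x; rfl
  | cons w t ih =>
      intro x
      rw [sdsMap_cons, ih]
      by_cases hwv : w = v
      · subst hwv; rw [step_isolated G w h x]
      · exact localStep_ne _ _ _ _ _ _ (fun hh => hwv (hh.symm))

lemma sds_no_edges (G : SimpleGraph (Fin n)) (h : ∀ a b, ¬ G.Adj a b) (l : List (Fin n))
    (x : Fin n → Bool) : sdsMap G (fun _ => 1) (kfun G) l x = x := by
  induction l generalizing x with
  | nil => rfl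
  | cons w t ih => rw [sdsMap_cons, step_isolated G w (h w), ih]

lemma step_leaf (G : SimpleGraph (Fin n)) (ℓ u : Fin n) (hadj : G.Adj ℓ u)
    (hleaf : ∀ w, G.Adj ℓ w → w = u) (x : Fin n → Bool) :
    localStep G (fun _ => 1) (kfun G) x ℓ = Function.update x ℓ (x u) := by
  have hnb : G.neighborSet ℓ = {u} := by
    ext w; simp only [mem_neighborSet, Set.mem_singleton_iff]
    exact ⟨fun hw => hleaf w hw, fun hw => hw ▸ hadj⟩
  have hk : kfun G ℓ = 2 := by simp [kfun, hnb]
  have hset : {w : Fin n | G.Adj ℓ w ∧ x w = true} = if x u = true then {u} else ∅ := by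
    cases hxu : x u with
    | true => ext w; simp only [Set.mem_setOf_eq, if_true, Set.mem_singleton_iff]
              exact ⟨fun ⟨h1, _⟩ => hleaf w h1, fun hw => ⟨hw ▸ hadj, hw ▸ hxu⟩⟩
    | false =>
        ext w
        simp only [if_neg Bool.false_ne_true, Set.mem_setOf_eq, Set.mem_empty_iff_false,
          iff_false]
        rintro ⟨h1, h2⟩
        rw [hleaf w h1] at h2
        simp [hxu] at h2
  have hσ : sigmaLoc G x ℓ = (if x u = true then 1 else 0) + (if x ℓ = true then 1 else 0) := by
    rw [sigmaLoc, hset]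
    cases hxu : x u <;> simp
  unfold localStep
  rw [hσ, hk]
  cases hxl : x ℓ <;> cases hxu : x u <;> simp

section Red
set_option linter.unusedSectionVars false

variable {n : ℕ} {G G' : SimpleGraph (Fin n)} {ℓ u : Fin n}

-- characterization of G' = G with all edges at ℓ removed
variable (hadj : G.Adj ℓ u) (hleaf : ∀ w, G.Adj ℓ w → w = u)
  (hG' : ∀ a b, G'.Adj a b ↔ G.Adj a b ∧ a ≠ ℓ ∧ b ≠ ℓ)

include hadj hleaf hG'

lemma hne : ℓ ≠ u := G.ne_of_adj hadj

lemma hiso : ∀ w, ¬ G'.Adj ℓ w := by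
  intro w hw
  exact ((hG' ℓ w).mp hw).2.1 rfl

lemma hnotl : ∀ v w, v ≠ u → G.Adj v w → w ≠ ℓ := by
  intro v w hvu hvw hwl
  subst hwl
  exact hvu (hleaf v hvw.symm)

lemma hNs : ∀ v, v ≠ ℓ → v ≠ u → G.neighborSet v = G'.neighborSet v := by
  intro v hvl hvu
  ext w
  simp only [SimpleGraph.mem_neighborSet, hG']
  exact ⟨fun h => ⟨h, hvl, hnotl hadj hleaf hG' v w hvu h⟩, fun h => h.1⟩

lemma hNu : G.neighborSet u = insert ℓ (G'.neighborSet u) := by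
  ext w
  simp only [SimpleGraph.mem_neighborSet, Set.mem_insert_iff, hG']
  constructor
  · intro h
    by_cases hwl : w = ℓ
    · exact Or.inl hwl
    · exact Or.inr ⟨h, fun h' => (hne hadj hleaf hG') h'.symm, hwl⟩
  · rintro (rfl | h)
    · exact hadj.symm
    · exact h.1

lemma hkd_u : kfun G u = kfun G' u + 1 := by
  have hl : ℓ ∉ G'.neighborSet u := fun h => hiso hadj hleaf hG' u h.symm
  rw [kfun, kfun, hNu hadj hleaf hG',
    Set.ncard_insert_of_notMem hl (G'.neighborSet u).toFinite]

/-- the updated value at `v` agrees when `v ∉ {ℓ, u}` and the states agree off `ℓ`. -/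
lemma step_congr_at (x x' : Fin n → Bool) (v : Fin n) (hvl : v ≠ ℓ) (hvu : v ≠ u)
    (hR : ∀ w, w ≠ ℓ → x w = x' w) :
    localStep G (fun _ => 1) (kfun G) x v v = localStep G' (fun _ => 1) (kfun G') x' v v := by
  have hS : {w : Fin n | G.Adj v w ∧ x w = true} = {w : Fin n | G'.Adj v w ∧ x' w = true} := by
    ext w
    simp only [Set.mem_setOf_eq, hG']
    constructor
    · intro ⟨h1, h2⟩
      have hwl : w ≠ ℓ := hnotl hadj hleaf hG' v w hvu h1
      exact ⟨⟨h1, hvl, hwl⟩, (hR w hwl) ▸ h2⟩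
    · intro ⟨⟨h1, _, hwl⟩, h2⟩
      exact ⟨h1, (hR w hwl).symm ▸ h2⟩
  have hσ : sigmaLoc G x v = sigmaLoc G' x' v := by
    rw [sigmaLoc, sigmaLoc, hS, hR v hvl]
  have hk : kfun G v = kfun G' v := by rw [kfun, kfun, hNs hadj hleaf hG' v hvl hvu]
  unfold localStep
  rw [Function.update_self, Function.update_self, hσ, hk, hR v hvl]

/-- the updated value at `u` agrees, provided `x ℓ = x u`. -/
lemma step_u_at (x x' : Fin n → Bool) (hlu : x ℓ = x u) (hR : ∀ w, w ≠ ℓ → x w = x' w) :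
    localStep G (fun _ => 1) (kfun G) x u u = localStep G' (fun _ => 1) (kfun G') x' u u := by
  have hul : u ≠ ℓ := fun h => (hne hadj hleaf hG') h.symm
  have hS' : ∀ w, w ≠ ℓ → ((G.Adj u w ∧ x w = true) ↔ (G'.Adj u w ∧ x' w = true)) := by
    intro w hwl
    rw [hG', hR w hwl]
    exact ⟨fun ⟨h1, h2⟩ => ⟨⟨h1, hul, hwl⟩, h2⟩, fun ⟨h1, h2⟩ => ⟨h1.1, h2⟩⟩
  have hxu : x u = x' u := hR u hul
  unfold localStep
  rw [Function.update_self, Function.update_self, ← hxu]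
  cases hx : x u with
  | true =>
      have hxl : x ℓ = true := hlu.trans hx
      have hS : {w : Fin n | G.Adj u w ∧ x w = true}
          = insert ℓ {w : Fin n | G'.Adj u w ∧ x' w = true} := by
        ext w
        by_cases hwl : w = ℓ
        · subst hwl
          simp only [Set.mem_setOf_eq, Set.mem_insert_iff]
          exact iff_of_true ⟨hadj.symm, hxl⟩ (by simp)
        · simp only [Set.mem_setOf_eq, Set.mem_insert_iff, hS' w hwl]
          exact ⟨fun h => Or.inr h, fun h => h.elim (fun h' => absurd h' hwl) id⟩
      have hlnot : ℓ ∉ {w : Fin n | G'.Adj u w ∧ x' w = true} := by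
        intro h
        exact hiso hadj hleaf hG' u h.1.symm
      have hσ : sigmaLoc G x u = sigmaLoc G' x' u + 1 := by
        rw [sigmaLoc, sigmaLoc, hS, ← hxu, hx,
          Set.ncard_insert_of_notMem hlnot (Set.toFinite _)]
        simp
      rw [hσ, hkd_u hadj hleaf hG']
      simp [Nat.add_lt_add_iff_right]
  | false =>
      have hxl : x ℓ = false := hlu.trans hx
      have hS : {w : Fin n | G.Adj u w ∧ x w = true}
          = {w : Fin n | G'.Adj u w ∧ x' w = true} := by
        ext w
        by_cases hwl : w = ℓ
        · subst hwl
          simp only [Set.mem_setOf_eq]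
          constructor
          · rintro ⟨_, h2⟩; rw [hxl] at h2; exact absurd h2 Bool.false_ne_true
          · intro h; exact absurd h.1.symm (hiso hadj hleaf hG' u)
        · exact hS' w hwl
      have hσ : sigmaLoc G x u = sigmaLoc G' x' u := by
        rw [sigmaLoc, sigmaLoc, hS, hxu]
      rw [hσ]
      simp

lemma seg : ∀ (b : List (Fin n)), (∀ v ∈ b, v ≠ ℓ ∧ v ≠ u) →
    ∀ (x x' : Fin n → Bool), (∀ w, w ≠ ℓ → x w = x' w) →
    ∀ w, w ≠ ℓ →
      sdsMap G (fun _ => 1) (kfun G) b x w = sdsMap G' (fun _ => 1) (kfun G') b x' w := by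
  intro b
  induction b with
  | nil => intro _ x x' hR; exact hR
  | cons v t ih =>
      intro hb x x' hR
      have hv := hb v (List.mem_cons_self)
      have ht : ∀ w ∈ t, w ≠ ℓ ∧ w ≠ u := fun w hw => hb w (List.mem_cons_of_mem _ hw)
      simp only [sdsMap_cons]
      apply ih ht
      intro w hw
      by_cases hwv : w = v
      · subst hwv
        exact step_congr_at hadj hleaf hG' x x' w hv.1 hv.2 hR
      · rw [localStep_ne _ _ _ _ _ _ hwv, localStep_ne _ _ _ _ _ _ hwv]
        exact hR w hw

lemma stepu_R (x x' : Fin n → Bool) (hlu : x ℓ = x u) (hR : ∀ w, w ≠ ℓ → x w = x' w) :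
    ∀ w, w ≠ ℓ →
      localStep G (fun _ => 1) (kfun G) x u w = localStep G' (fun _ => 1) (kfun G') x' u w := by
  intro w hw
  by_cases hwu : w = u
  · subst hwu
    exact step_u_at hadj hleaf hG' x x' hlu hR
  · rw [localStep_ne _ _ _ _ _ _ hwu, localStep_ne _ _ _ _ _ _ hwu]
    exact hR w hw

lemma stepl_R (x x' : Fin n → Bool) (hR : ∀ w, w ≠ ℓ → x w = x' w) :
    ∀ w, w ≠ ℓ →
      localStep G (fun _ => 1) (kfun G) x ℓ w = localStep G' (fun _ => 1) (kfun G') x' ℓ w := by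
  intro w hw
  rw [localStep_ne _ _ _ _ _ _ hw, localStep_ne _ _ _ _ _ _ hw]
  exact hR w hw

lemma passA_R (a b c : List (Fin n)) (ha : ∀ v ∈ a, v ≠ ℓ ∧ v ≠ u)
    (hb : ∀ v ∈ b, v ≠ ℓ ∧ v ≠ u) (hc : ∀ v ∈ c, v ≠ ℓ ∧ v ≠ u)
    (x x' : Fin n → Bool) (hR : ∀ w, w ≠ ℓ → x w = x' w) :
    ∀ w, w ≠ ℓ →
      sdsMap G (fun _ => 1) (kfun G) (a ++ ℓ :: (b ++ u :: c)) x w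
        = sdsMap G' (fun _ => 1) (kfun G') (a ++ ℓ :: (b ++ u :: c)) x' w := by
  have hul : u ≠ ℓ := fun h => hne hadj hleaf hG' h.symm
  have hua : u ∉ a := fun h => (ha u h).2 rfl
  have hub : u ∉ b := fun h => (hb u h).2 rfl
  have hlb : ℓ ∉ b := fun h => (hb ℓ h).1 rfl
  simp only [sdsMap_append, sdsMap_cons]
  apply seg hadj hleaf hG' c hc
  apply stepu_R hadj hleaf hG'
  · -- state before step u satisfies ℓ-coord = u-coord
    rw [sdsMap_not_mem _ _ _ b _ ℓ hlb, sdsMap_not_mem _ _ _ b _ u hub,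
      step_leaf G ℓ u hadj hleaf, Function.update_self, Function.update_of_ne hul]
  · apply seg hadj hleaf hG' b hb
    apply stepl_R hadj hleaf hG'
    exact seg hadj hleaf hG' a ha x x' hR

lemma passB_R (a b c : List (Fin n)) (ha : ∀ v ∈ a, v ≠ ℓ ∧ v ≠ u)
    (hb : ∀ v ∈ b, v ≠ ℓ ∧ v ≠ u) (hc : ∀ v ∈ c, v ≠ ℓ ∧ v ≠ u)
    (x x' : Fin n → Bool) (hlu : x ℓ = x u) (hR : ∀ w, w ≠ ℓ → x w = x' w) :
    ∀ w, w ≠ ℓ →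
      sdsMap G (fun _ => 1) (kfun G) (a ++ u :: (b ++ ℓ :: c)) x w
        = sdsMap G' (fun _ => 1) (kfun G') (a ++ u :: (b ++ ℓ :: c)) x' w := by
  have hua : u ∉ a := fun h => (ha u h).2 rfl
  have hla : ℓ ∉ a := fun h => (ha ℓ h).1 rfl
  simp only [sdsMap_append, sdsMap_cons]
  apply seg hadj hleaf hG' c hc
  apply stepl_R hadj hleaf hG'
  apply seg hadj hleaf hG' b hb
  apply stepu_R hadj hleaf hG'
  · rw [sdsMap_not_mem _ _ _ a _ ℓ hla, sdsMap_not_mem _ _ _ a _ u hua]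
    exact hlu
  · exact seg hadj hleaf hG' a ha x x' hR

lemma passA_l (a b c : List (Fin n)) (ha : ∀ v ∈ a, v ≠ ℓ ∧ v ≠ u)
    (hb : ∀ v ∈ b, v ≠ ℓ ∧ v ≠ u) (hc : ∀ v ∈ c, v ≠ ℓ ∧ v ≠ u) (x : Fin n → Bool) :
    sdsMap G (fun _ => 1) (kfun G) (a ++ ℓ :: (b ++ u :: c)) x ℓ = x u := by
  have hul : ℓ ≠ u := hne hadj hleaf hG'
  have hua : u ∉ a := fun h => (ha u h).2 rfl
  have hlb : ℓ ∉ b := fun h => (hb ℓ h).1 rfl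
  have hlc : ℓ ∉ c := fun h => (hc ℓ h).1 rfl
  simp only [sdsMap_append, sdsMap_cons]
  rw [sdsMap_not_mem _ _ _ c _ ℓ hlc, localStep_ne _ _ _ _ _ _ hul,
    sdsMap_not_mem _ _ _ b _ ℓ hlb, step_leaf G ℓ u hadj hleaf, Function.update_self,
    sdsMap_not_mem _ _ _ a _ u hua]

lemma passB_lu (a b c : List (Fin n)) (ha : ∀ v ∈ a, v ≠ ℓ ∧ v ≠ u)
    (hb : ∀ v ∈ b, v ≠ ℓ ∧ v ≠ u) (hc : ∀ v ∈ c, v ≠ ℓ ∧ v ≠ u) (x : Fin n → Bool) :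
    sdsMap G (fun _ => 1) (kfun G) (a ++ u :: (b ++ ℓ :: c)) x ℓ
      = sdsMap G (fun _ => 1) (kfun G) (a ++ u :: (b ++ ℓ :: c)) x u := by
  have hul : u ≠ ℓ := fun h => hne hadj hleaf hG' h.symm
  have huc : u ∉ c := fun h => (hc u h).2 rfl
  have hlc : ℓ ∉ c := fun h => (hc ℓ h).1 rfl
  simp only [sdsMap_append, sdsMap_cons]
  rw [sdsMap_not_mem _ _ _ c _ ℓ hlc, sdsMap_not_mem _ _ _ c _ u huc,
    step_leaf G ℓ u hadj hleaf, Function.update_self,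
    Function.update_of_ne hul]

end Red

lemma exists_leaf {n : ℕ} (G : SimpleGraph (Fin n)) (hac : G.IsAcyclic)
    (hE : ∃ a b, G.Adj a b) : ∃ ℓ u, G.Adj ℓ u ∧ ∀ w, G.Adj ℓ w → w = u := by
  classical
  obtain ⟨a₀, b₀, hab⟩ := hE
  have hn : 1 ≤ n := by
    rcases Nat.eq_zero_or_pos n with h | h
    · subst h; exact absurd a₀.2 (Nat.not_lt_zero _)
    · exact h
  set P : ℕ → Prop := fun k =>
    ∃ (a b : Fin n) (p : G.Walk a b), p.IsPath ∧ p.length = k with hP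
  have hP1 : P 1 := by
    refine ⟨a₀, b₀, SimpleGraph.Walk.cons hab SimpleGraph.Walk.nil, ?_, rfl⟩
    simp [SimpleGraph.Walk.cons_isPath_iff, hab.ne]
  have hbound : ∀ k, P k → k ≤ n := by
    rintro k ⟨a, b, p, hp, rfl⟩
    have := hp.length_lt
    rw [Fintype.card_fin] at this
    exact this.le
  set L := Nat.findGreatest P n with hL
  have hPL : P L := Nat.findGreatest_spec hn hP1
  have hmax : ∀ k, P k → k ≤ L := fun k hk => Nat.le_findGreatest (hbound k hk) hk
  have hL1 : 1 ≤ L := Nat.le_findGreatest hn hP1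
  obtain ⟨a, b, p, hp, hlen⟩ := hPL
  cases p with
  | nil => simp at hlen; omega
  | @cons _ d _ h₀ tl =>
      refine ⟨a, d, h₀, ?_⟩
      intro c hc
      by_contra hcd
      have htl : tl.IsPath ∧ a ∉ tl.support :=
        (SimpleGraph.Walk.cons_isPath_iff h₀ tl).mp hp
      by_cases hmem : c ∈ (SimpleGraph.Walk.cons h₀ tl).support
      · set p := SimpleGraph.Walk.cons h₀ tl
        have hq : (p.takeUntil c hmem).IsPath := hp.takeUntil hmem
        have hedge : s(c, a) ∈ (p.takeUntil c hmem).edges := by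
          by_contra he
          exact hac _ (((p.takeUntil c hmem).cons_isCycle_iff hc.symm).mpr ⟨hq, he⟩)
        have hedge' : s(c, a) ∈ p.edges := SimpleGraph.Walk.edges_takeUntil_subset _ _ hedge
        rw [SimpleGraph.Walk.edges_cons] at hedge'
        rcases List.mem_cons.mp hedge' with heq | hmem'
        · rw [Sym2.eq_iff] at heq
          rcases heq with ⟨h1, _⟩ | ⟨h1, _⟩
          · exact hc.ne' h1
          · exact hcd h1
        · have : s(a, c) ∈ tl.edges := by rwa [Sym2.eq_swap] at hmem'
          exact htl.2 (SimpleGraph.Walk.fst_mem_support_of_mem_edges tl this)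
      · have hp' : (SimpleGraph.Walk.cons hc.symm (SimpleGraph.Walk.cons h₀ tl)).IsPath :=
          (SimpleGraph.Walk.cons_isPath_iff _ _).mpr ⟨hp, hmem⟩
        have : L + 1 ≤ L := hmax (L + 1)
          ⟨c, b, _, hp', by simp [SimpleGraph.Walk.length_cons, hlen]⟩
        omega

lemma decomp {α : Type*} : ∀ (l : List α), l.Nodup → ∀ (ℓ u : α), ℓ ∈ l → u ∈ l → ℓ ≠ u →
    ∃ a b c, (∀ v ∈ a, v ≠ ℓ ∧ v ≠ u) ∧ (∀ v ∈ b, v ≠ ℓ ∧ v ≠ u) ∧ (∀ v ∈ c, v ≠ ℓ ∧ v ≠ u) ∧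
      (l = a ++ ℓ :: (b ++ u :: c) ∨ l = a ++ u :: (b ++ ℓ :: c)) := by
  intro l
  induction l with
  | nil => intro _ ℓ u h; exact absurd h List.not_mem_nil
  | cons v t ih =>
      intro hnd ℓ u hl hu hlu
      have hvt : v ∉ t := (List.nodup_cons.mp hnd).1
      have hnt : t.Nodup := (List.nodup_cons.mp hnd).2
      by_cases hvl : v = ℓ
      · subst hvl
        have hut : u ∈ t := by
          rcases List.mem_cons.mp hu with h | h
          · exact absurd h.symm hlu
          · exact h
        obtain ⟨b, c, rfl⟩ := List.append_of_mem hut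
        have hnb : u ∉ b ∧ u ∉ c := by
          rw [List.nodup_append] at hnt
          exact ⟨fun h => hnt.2.2 _ h _ List.mem_cons_self rfl, (List.nodup_cons.mp hnt.2.1).1⟩
        refine ⟨[], b, c, by simp, ?_, ?_, Or.inl rfl⟩
        · intro w hw
          exact ⟨fun h => hvt (h ▸ (List.mem_append.mpr (Or.inl hw))), fun h => hnb.1 (h ▸ hw)⟩
        · intro w hw
          refine ⟨fun h => hvt ?_, fun h => hnb.2 (h ▸ hw)⟩
          subst h
          exact List.mem_append.mpr (Or.inr (List.mem_cons_of_mem _ hw))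
      · by_cases hvu : v = u
        · subst hvu
          have hlt : ℓ ∈ t := by
            rcases List.mem_cons.mp hl with h | h
            · exact absurd h hlu
            · exact h
          obtain ⟨b, c, rfl⟩ := List.append_of_mem hlt
          have hnb : ℓ ∉ b ∧ ℓ ∉ c := by
            rw [List.nodup_append] at hnt
            exact ⟨fun h => hnt.2.2 _ h _ List.mem_cons_self rfl, (List.nodup_cons.mp hnt.2.1).1⟩
          refine ⟨[], b, c, by simp, ?_, ?_, Or.inr rfl⟩
          · intro w hw
            exact ⟨fun h => hnb.1 (h ▸ hw), fun h => hvt (h ▸ (List.mem_append.mpr (Or.inl hw)))⟩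
          · intro w hw
            refine ⟨fun h => hnb.2 (h ▸ hw), fun h => hvt ?_⟩
            subst h
            exact List.mem_append.mpr (Or.inr (List.mem_cons_of_mem _ hw))
        · have hlt : ℓ ∈ t := by
            rcases List.mem_cons.mp hl with h | h
            · exact absurd h.symm hvl
            · exact h
          have hut : u ∈ t := by
            rcases List.mem_cons.mp hu with h | h
            · exact absurd h.symm hvu
            · exact h
          obtain ⟨a, b, c, ha, hb, hc, hcase⟩ := ih hnt ℓ u hlt hut hlu
          refine ⟨v :: a, b, c, ?_, hb, hc, ?_⟩
          · intro w hw
            rcases List.mem_cons.mp hw with rfl | h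
            · exact ⟨hvl, hvu⟩
            · exact ha w h
          · rcases hcase with h | h
            · exact Or.inl (by rw [h]; rfl)
            · exact Or.inr (by rw [h]; rfl)

lemma aux (m : ℕ) : ∀ (n : ℕ) (G : SimpleGraph (Fin n)), G.IsAcyclic → G.edgeSet.ncard ≤ m →
    ∀ (l : List (Fin n)), l.Nodup → (∀ v, v ∈ l) →
    ∀ (x : Fin n → Bool) (q : ℕ), 0 < q →
      (sdsMap G (fun _ => 1) (kfun G) l)^[q] x = x →
      sdsMap G (fun _ => 1) (kfun G) l x = x := by
  induction m with
  | zero =>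
      intro n G hac hcard l _ _ x q _ _
      have hE : G.edgeSet = ∅ := by
        rw [← Set.ncard_eq_zero (Set.toFinite _)]; omega
      have hnadj : ∀ a b, ¬ G.Adj a b := by
        intro a b hab
        have h : s(a, b) ∈ G.edgeSet := hab
        rw [hE] at h; exact h
      exact sds_no_edges G hnadj l x
  | succ m ih =>
      intro n G hac hcard l hnd hmem x q hq hper
      by_cases hE : ∃ a b, G.Adj a b
      · obtain ⟨ℓ, u, hadj, hleaf⟩ := exists_leaf G hac hE
        set G' := G.deleteEdges {s(ℓ, u)} with hG'def
        have hG' : ∀ a b, G'.Adj a b ↔ G.Adj a b ∧ a ≠ ℓ ∧ b ≠ ℓ := by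
          intro a b
          rw [hG'def, SimpleGraph.deleteEdges_adj]
          simp only [Set.mem_singleton_iff]
          constructor
          · rintro ⟨h1, h2⟩
            refine ⟨h1, ?_, ?_⟩
            · rintro rfl
              exact h2 (by rw [hleaf b h1])
            · rintro rfl
              have ha : a = u := hleaf a h1.symm
              subst ha
              exact h2 Sym2.eq_swap
          · rintro ⟨h1, h2, h3⟩
            refine ⟨h1, fun h => ?_⟩
            rw [Sym2.eq_iff] at h
            rcases h with ⟨rfl, rfl⟩ | ⟨rfl, rfl⟩
            · exact h2 rfl
            · exact h3 rfl
        have hac' : G'.IsAcyclic := by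
          intro v c hc
          exact hac (c.mapLe (SimpleGraph.deleteEdges_le _)) (hc.mapLe _)
        have hcard' : G'.edgeSet.ncard ≤ m := by
          have hmeme : s(ℓ, u) ∈ G.edgeSet := hadj
          have heq : G'.edgeSet = G.edgeSet \ {s(ℓ, u)} := SimpleGraph.edgeSet_deleteEdges _
          have hlt := Set.ncard_diff_singleton_lt_of_mem hmeme (Set.toFinite _)
          rw [heq]; omega
        have hlu : ℓ ≠ u := hne hadj hleaf hG'
        obtain ⟨a, b, c, ha, hb, hc, hcase⟩ := decomp l hnd ℓ u (hmem ℓ) (hmem u) hlu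
        have hiso' : ∀ w, ¬ G'.Adj ℓ w := hiso hadj hleaf hG'
        rcases hcase with hsplit | hsplit
        · -- case A : ℓ updated before u
          subst hsplit
          set F := sdsMap G (fun _ => 1) (kfun G) (a ++ ℓ :: (b ++ u :: c)) with hF
          set F' := sdsMap G' (fun _ => 1) (kfun G') (a ++ ℓ :: (b ++ u :: c)) with hF'
          have hFpresl : ∀ y, F' y ℓ = y ℓ := fun y => sds_isolated_pres G' ℓ hiso' _ y
          have key : ∀ k, (∀ w, w ≠ ℓ → F^[k] x w = F'^[k] x w) ∧ F'^[k] x ℓ = x ℓ := by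
            intro k
            induction k with
            | zero => exact ⟨fun _ _ => rfl, rfl⟩
            | succ k ihk =>
                rw [Function.iterate_succ_apply', Function.iterate_succ_apply']
                constructor
                · exact passA_R hadj hleaf hG' a b c ha hb hc _ _ ihk.1
                · rw [hFpresl]; exact ihk.2
          have hfix' : F'^[q] x = x := by
            funext w
            by_cases hw : w = ℓ
            · subst hw; exact (key q).2
            · rw [← (key q).1 w hw, hper]
          have hF'x : F' x = x := ih n G' hac' hcard' _ hnd hmem x q hq hfix'
          have hF'k : ∀ k, F'^[k] x = x := fun k => Function.iterate_fixed hF'x k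
          have hoff : ∀ k, ∀ w, w ≠ ℓ → F^[k] x w = x w := by
            intro k w hw
            rw [(key k).1 w hw, hF'k k]
          have hlval : ∀ k, F^[k + 1] x ℓ = x u := by
            intro k
            rw [Function.iterate_succ_apply']
            rw [show F (F^[k] x) ℓ = x u ↔ True from iff_of_eq (eq_true_intro ?_)]
            · trivial
            rw [hF, passA_l hadj hleaf hG' a b c ha hb hc]
            exact hoff k u (fun h => hlu h.symm)
          have hxlu : x ℓ = x u := by
            have h := hlval (q - 1)
            rw [show q - 1 + 1 = q by omega, hper] at h
            exact h
          funext w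
          by_cases hw : w = ℓ
          · subst hw
            have h := hlval 0
            rw [zero_add, Function.iterate_one] at h
            rw [h, ← hxlu]
          · have h := hoff 1 w hw
            rwa [Function.iterate_one] at h
        · -- case B : u updated before ℓ
          subst hsplit
          set F := sdsMap G (fun _ => 1) (kfun G) (a ++ u :: (b ++ ℓ :: c)) with hF
          set F' := sdsMap G' (fun _ => 1) (kfun G') (a ++ u :: (b ++ ℓ :: c)) with hF'
          have hFpresl : ∀ y, F' y ℓ = y ℓ := fun y => sds_isolated_pres G' ℓ hiso' _ y
          have hBlu : ∀ y, F y ℓ = F y u := fun y => passB_lu hadj hleaf hG' a b c ha hb hc y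
          have hxlu : x ℓ = x u := by
            have h1 : F (F^[q - 1] x) = x := by
              rw [← Function.iterate_succ_apply' F (q - 1) x,
                show (q - 1).succ = q by omega, hper]
            rw [← h1]
            exact hBlu _
          have key : ∀ k, (∀ w, w ≠ ℓ → F^[k] x w = F'^[k] x w) ∧ F'^[k] x ℓ = x ℓ
              ∧ F^[k] x ℓ = F^[k] x u := by
            intro k
            induction k with
            | zero => exact ⟨fun _ _ => rfl, rfl, hxlu⟩
            | succ k ihk =>
                rw [Function.iterate_succ_apply', Function.iterate_succ_apply']
                refine ⟨?_, by rw [hFpresl]; exact ihk.2.1, hBlu _⟩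
                exact passB_R hadj hleaf hG' a b c ha hb hc _ _ ihk.2.2 ihk.1
          have hfix' : F'^[q] x = x := by
            funext w
            by_cases hw : w = ℓ
            · subst hw; exact (key q).2.1
            · rw [← (key q).1 w hw, hper]
          have hF'x : F' x = x := ih n G' hac' hcard' _ hnd hmem x q hq hfix'
          have hF'k : ∀ k, F'^[k] x = x := fun k => Function.iterate_fixed hF'x k
          have hoff : ∀ k, ∀ w, w ≠ ℓ → F^[k] x w = x w := by
            intro k w hw
            rw [(key k).1 w hw, hF'k k]
          funext w
          by_cases hw : w = ℓ
          · subst hw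
            have h := hoff 1 u (fun h => hlu h.symm)
            rw [Function.iterate_one] at h
            rw [hBlu x, h, ← hxlu]
          · have h := hoff 1 w hw
            rwa [Function.iterate_one] at h
      · push_neg at hE
        exact sds_no_edges G hE l x

end SDSTree


/-- over a finite tree with thresholds `kup v = 1` and `kdown v = d(v) + 1`
at every vertex `v`, for every permutation update sequence `π` every periodic point of the
SDS map `F_π` is a fixed point: `F_π` only has fixed points as limit sets. -/
theorem tree_sds_only_fixed_points
    (n : ℕ) (G : SimpleGraph (Fin n)) (hG : G.IsTree)
    (π : Equiv.Perm (Fin n)) :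
    ∀ (x : Fin n → Bool) (q : ℕ), 0 < q →
      (sdsMap G (fun _ => 1) (fun u => (G.neighborSet u).ncard + 1)
          (List.ofFn fun i => π i))^[q] x = x →
      sdsMap G (fun _ => 1) (fun u => (G.neighborSet u).ncard + 1)
          (List.ofFn fun i => π i) x = x := by
  intro x q hq hper
  have hnd : (List.ofFn fun i => π i).Nodup :=
    List.nodup_ofFn.mpr (fun i j h => π.injective h)
  have hmem : ∀ v : Fin n, v ∈ (List.ofFn fun i => π i) := by
    intro v
    rw [List.mem_ofFn]
    exact ⟨π.symm v, π.apply_symm_apply v⟩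
  exact SDSTree.aux (G.edgeSet.ncard) n G hG.IsAcyclic le_rfl _ hnd hmem x q hq hper
end

section
/- Let F be the synchronous threshold map on {0,1}^n determined by a real symmetric n×n matrix A and a threshold vector θ ∈ ℝ^n. Then for every x ∈ {0,1}^n there exists a natural number s such that F^{s+2}(x) = F^{s}(x). -/
namespace TSP

noncomputable def v (b : Bool) : ℝ := if b = true then 1 else 0

lemma v_nonneg (b : Bool) : 0 ≤ v b := by unfold v; split <;> norm_num
lemma v_le_one (b : Bool) : v b ≤ 1 := by unfold v; split <;> norm_num

variable {n : ℕ}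

noncomputable def S (A : Fin n → Fin n → ℝ) (y : Fin n → Bool) (i : Fin n) : ℝ :=
  ∑ j, A i j * v (y j)

noncomputable def E (A : Fin n → Fin n → ℝ) (θ : Fin n → ℝ) (x y : Fin n → Bool) : ℝ :=
  ∑ i, (θ i * (v (x i) + v (y i)) - ∑ j, A i j * v (x i) * v (y j))

lemma sum_mul_v (A : Fin n → Fin n → ℝ) (x y : Fin n → Bool) (i : Fin n) :
    (∑ j, A i j * v (x i) * v (y j)) = v (x i) * S A y i := by
  rw [S, Finset.mul_sum]
  exact Finset.sum_congr rfl fun j _ => by ring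

lemma E_diff (A : Fin n → Fin n → ℝ) (hA : ∀ i j, A i j = A j i) (θ : Fin n → ℝ)
    (a b c : Fin n → Bool) :
    E A θ c b - E A θ b a = -∑ i, (v (c i) - v (a i)) * (S A b i - θ i) := by
  have hswap : (∑ i, ∑ j, A i j * v (b i) * v (a j)) = ∑ i, ∑ j, A i j * v (a i) * v (b j) := by
    rw [Finset.sum_comm]
    refine Finset.sum_congr rfl fun i _ => Finset.sum_congr rfl fun j _ => ?_
    rw [hA]; ring
  unfold E
  rw [Finset.sum_sub_distrib, Finset.sum_sub_distrib, hswap,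
    ← Finset.sum_neg_distrib]
  have : ∀ i : Fin n, -((v (c i) - v (a i)) * (S A b i - θ i)) =
      (θ i * (v (c i) + v (b i)) - v (c i) * S A b i)
        - (θ i * (v (b i) + v (a i)) - v (a i) * S A b i) := by
    intro i; ring
  calc (∑ i, θ i * (v (c i) + v (b i)) - ∑ i, ∑ j, A i j * v (c i) * v (b j))
        - (∑ i, θ i * (v (b i) + v (a i)) - ∑ i, ∑ j, A i j * v (a i) * v (b j))
      = ∑ i, ((θ i * (v (c i) + v (b i)) - v (c i) * S A b i)
          - (θ i * (v (b i) + v (a i)) - v (a i) * S A b i)) := by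
        simp only [sum_mul_v, Finset.sum_sub_distrib]
    _ = ∑ i, -((v (c i) - v (a i)) * (S A b i - θ i)) :=
        Finset.sum_congr rfl fun i _ => (this i).symm

end TSP

namespace TSP

lemma term_nonneg (A : Fin n → Fin n → ℝ) (θ : Fin n → ℝ)
    (F : (Fin n → Bool) → Fin n → Bool)
    (hF : ∀ (x : Fin n → Bool) (i : Fin n), F x i = true ↔
      θ i ≤ ∑ j, A i j * (if x j = true then (1 : ℝ) else 0))
    (y : Fin n → Bool) (i : Fin n) (bp : Bool) :
    0 ≤ (v (F y i) - v bp) * (S A y i - θ i) := by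
  have hS : S A y i = ∑ j, A i j * (if y j = true then (1 : ℝ) else 0) := rfl
  by_cases h : F y i = true
  · have h1 : θ i ≤ S A y i := hS ▸ (hF y i).mp h
    have h2 : v bp ≤ v (F y i) := by rw [h]; exact v_le_one bp
    nlinarith
  · have h1 : S A y i < θ i := by
      by_contra hc
      exact h ((hF y i).mpr (hS ▸ le_of_not_gt hc))
    have h2 : v (F y i) ≤ v bp := by
      simp only [Bool.not_eq_true] at h
      rw [h]
      have := v_nonneg bp
      unfold v; norm_num; exact this
    nlinarith

lemma term_pos (A : Fin n → Fin n → ℝ) (θ : Fin n → ℝ)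
    (F : (Fin n → Bool) → Fin n → Bool)
    (hF : ∀ (x : Fin n → Bool) (i : Fin n), F x i = true ↔
      θ i ≤ ∑ j, A i j * (if x j = true then (1 : ℝ) else 0))
    (y : Fin n → Bool) (i : Fin n)
    (hfalse : F y i = false) :
    0 < (v (F y i) - v true) * (S A y i - θ i) := by
  have hS : S A y i = ∑ j, A i j * (if y j = true then (1 : ℝ) else 0) := rfl
  have h1 : S A y i < θ i := by
    by_contra hc
    have := (hF y i).mpr (hS ▸ le_of_not_gt hc)
    simp [hfalse] at this
  rw [hfalse]
  unfold v; norm_num; linarith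

end TSP

/-- the synchronous standard threshold map on `{0,1}^n` determined by a real
symmetric matrix `A` and a threshold vector `θ`: the new state of coordinate `i` is `1`
iff the weighted sum `∑ j, A i j * x j` is `≥ θ i`. Every state eventually satisfies
`F^[s+2] x = F^[s] x`. -/
theorem threshold_sync_two_periodic
    (n : ℕ) (A : Fin n → Fin n → ℝ) (hA : ∀ i j, A i j = A j i)
    (θ : Fin n → ℝ)
    (F : (Fin n → Bool) → Fin n → Bool)
    (hF : ∀ (x : Fin n → Bool) (i : Fin n), F x i = true ↔
      θ i ≤ ∑ j, A i j * (if x j = true then (1 : ℝ) else 0)) :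
    ∀ x : Fin n → Bool, ∃ s : ℕ, F^[s + 2] x = F^[s] x := by
  intro x
  set g : ℕ → (Fin n → Bool) := fun t => F^[t] x with hg
  have hg1 : ∀ t, g (t + 1) = F (g t) := by
    intro t
    simp only [hg, Function.iterate_succ_apply']
  -- pigeonhole: find repeated state
  obtain ⟨a, b, hab, heq⟩ : ∃ a b : ℕ, a ≠ b ∧ g a = g b :=
    Finite.exists_ne_map_eq_of_infinite g
  wlog hlt : a < b generalizing a b
  · exact this b a hab.symm heq.symm (hab.lt_or_gt.resolve_left hlt)
  set t₀ := a
  set p := b - a with hp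
  have hppos : 0 < p := Nat.sub_pos_of_lt hlt
  have hper0 : g (t₀ + p) = g t₀ := by
    have : t₀ + p = b := by omega
    rw [this]; exact heq.symm
  have hper : ∀ t, g (t₀ + t + p) = g (t₀ + t) := by
    intro t
    have h1 : g (t₀ + t + p) = F^[t] (g (t₀ + p)) := by
      simp only [hg]
      rw [show t₀ + t + p = t + (t₀ + p) by omega, Function.iterate_add_apply]
    have h2 : g (t₀ + t) = F^[t] (g t₀) := by
      simp only [hg]
      rw [show t₀ + t = t + t₀ by omega, Function.iterate_add_apply]
    rw [h1, h2, hper0]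
  -- energy
  set e : ℕ → ℝ := fun t => TSP.E A θ (g (t + 1)) (g t) with he
  have hestep : ∀ t, e (t + 1) - e t =
      -∑ i, (TSP.v (g (t + 2) i) - TSP.v (g t i)) * (TSP.S A (g (t + 1)) i - θ i) :=
    fun t => TSP.E_diff A hA θ (g t) (g (t + 1)) (g (t + 2))
  have htermnn : ∀ t i, 0 ≤ (TSP.v (g (t + 2) i) - TSP.v (g t i)) *
      (TSP.S A (g (t + 1)) i - θ i) := by
    intro t i
    have := TSP.term_nonneg A θ F hF (g (t + 1)) i (g t i)
    rwa [← hg1 (t + 1)] at this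
  have hmono : ∀ t, e (t + 1) ≤ e t := by
    intro t
    have h1 : e (t + 1) - e t ≤ 0 := by
      rw [hestep t]
      simp only [neg_nonpos]
      exact Finset.sum_nonneg fun i _ => htermnn t i
    linarith
  have hanti : ∀ s t : ℕ, s ≤ t → e t ≤ e s := by
    intro s t hst
    induction t, hst using Nat.le_induction with
    | base => exact le_rfl
    | succ t h ih => exact le_trans (hmono t) ih
  -- e is constant from t₀ on
  have heper : ∀ t, e (t₀ + t + p) = e (t₀ + t) := by
    intro t
    simp only [he]
    rw [show t₀ + t + p + 1 = t₀ + (t + 1) + p by omega, hper (t + 1), hper t,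
      show t₀ + (t + 1) = t₀ + t + 1 by omega]
  have hconst : ∀ t, e (t₀ + t) = e t₀ := by
    intro t
    have hk : ∀ k, e (t₀ + k * p) = e t₀ := by
      intro k
      induction k with
      | zero => simp
      | succ k ih =>
        rw [show t₀ + (k + 1) * p = t₀ + k * p + p by ring_nf, heper (k * p), ih]
    have h1 : e (t₀ + t * p) ≤ e (t₀ + t) := hanti _ _ (by nlinarith)
    have h2 : e (t₀ + t) ≤ e t₀ := hanti _ _ (by omega)
    rw [hk t] at h1
    linarith
  -- each term is zero from t₀ on
  have hterm0 : ∀ t i, t₀ ≤ t →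
      (TSP.v (g (t + 2) i) - TSP.v (g t i)) * (TSP.S A (g (t + 1)) i - θ i) = 0 := by
    intro t i ht
    have hsum : ∑ i, (TSP.v (g (t + 2) i) - TSP.v (g t i)) *
        (TSP.S A (g (t + 1)) i - θ i) = 0 := by
      have h1 : e (t + 1) = e t₀ := by
        have := hconst (t + 1 - t₀); rwa [show t₀ + (t + 1 - t₀) = t + 1 by omega] at this
      have h2 : e t = e t₀ := by
        have := hconst (t - t₀); rwa [show t₀ + (t - t₀) = t by omega] at this
      have := hestep t
      rw [h1, h2] at this
      linarith
    exact (Finset.sum_eq_zero_iff_of_nonneg fun i _ => htermnn t i).mp hsum i (Finset.mem_univ i)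
  -- monotonicity of coordinates along even steps
  have hup : ∀ t i, t₀ ≤ t → g t i = true → g (t + 2) i = true := by
    intro t i ht htrue
    by_contra hc
    have hfalse : g (t + 2) i = false := by
      cases h : g (t + 2) i
      · rfl
      · exact absurd h hc
    have hg2 : g (t + 2) = F (g (t + 1)) := hg1 (t + 1)
    have hpos := TSP.term_pos A θ F hF (g (t + 1)) i (by rw [← hg2]; exact hfalse)
    rw [← hg2] at hpos
    have hz := hterm0 t i ht
    rw [htrue] at hz
    linarith [hz, hpos]
  have hupk : ∀ k t i, t₀ ≤ t → g t i = true → g (t + 2 * k) i = true := by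
    intro k
    induction k with
    | zero => intro t i _ h; simpa using h
    | succ k ih =>
      intro t i ht h
      have h1 := hup t i ht h
      have := ih (t + 2) i (by omega) h1
      rwa [show t + 2 + 2 * k = t + 2 * (k + 1) by ring] at this
  have hperk : ∀ k t, g (t₀ + t + k * p) = g (t₀ + t) := by
    intro k
    induction k with
    | zero => intro t; simp
    | succ k ih =>
      intro t
      rw [show t₀ + t + (k + 1) * p = t₀ + (t + k * p) + p by ring, hper,
        show t₀ + (t + k * p) = t₀ + t + k * p by ring, ih]
  have h2p : g (t₀ + 2 * p) = g t₀ := by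
    have := hperk 2 0
    simpa [two_mul] using this
  refine ⟨t₀, ?_⟩
  show g (t₀ + 2) = g t₀
  funext i
  cases h : g t₀ i with
  | true => rw [hup t₀ i le_rfl h]
  | false =>
    cases h2 : g (t₀ + 2) i with
    | false => rfl
    | true =>
      have htr := hupk (p - 1) (t₀ + 2) i (by omega) h2
      rw [show t₀ + 2 + 2 * (p - 1) = t₀ + 2 * p by omega, h2p, h] at htr
      exact htr.symm
end

section
/- Let F = (f_1,…,f_n) be the synchronous threshold map on {0,1}^n determined by a real symmetric matrix A = (a_ij) and θ ∈ ℝ^n. Let T ≥ 1 and let z_1,…,z_n : ℤ/Tℤ → {0,1} satisfy z_j(l+1) = f_j(z_1(l),…,z_n(l)) for all j and all l ∈ ℤ/Tℤ (i.e., the columns form a periodic orbit of F of period dividing T). If z_i does not satisfy z_i(l+2) = z_i(l) for all l (its least period is at least 3), then Σ_{j=1}^n L(z_i, z_j) < 0. -/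
/-- let `F` be the synchronous standard threshold map on `{0,1}^n` given by a
real symmetric matrix `A` and thresholds `θ` (new state of coordinate `j` is `1` iff
`∑ k, A j k * x k ≥ θ j`). If `z_1, …, z_n : ℤ/Tℤ → {0,1}` satisfy
`z_j(l+1) = f_j(z_1(l), …, z_n(l))` for all `j, l`, and `z_i` does not satisfy
`z_i(l+2) = z_i(l)` for all `l`, then `∑_j L(z_i, z_j) < 0`, where
`L(z_i, z_j) = A i j * ∑_l (z_j(l+1) - z_j(l-1)) * z_i(l)`. -/
theorem threshold_orbit_L_sum_neg
    (n T : ℕ) [NeZero T] (A : Fin n → Fin n → ℝ) (hA : ∀ i j, A i j = A j i)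
    (θ : Fin n → ℝ)
    (z : Fin n → ZMod T → Bool)
    (horb : ∀ (j : Fin n) (l : ZMod T), z j (l + 1) = true ↔
      θ j ≤ ∑ k, A j k * (if z k l = true then (1 : ℝ) else 0))
    (i : Fin n)
    (hi : ¬ ∀ l : ZMod T, z i (l + 2) = z i l) :
    ∑ j, (A i j * ∑ l : ZMod T,
        ((if z j (l + 1) = true then (1 : ℝ) else 0) - (if z j (l - 1) = true then (1 : ℝ) else 0)) *
          (if z i l = true then (1 : ℝ) else 0)) < 0 := by
  classical
  set u : ZMod T → ℝ := fun l => if z i l = true then (1 : ℝ) else 0 with hu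
  set r : ZMod T → ℝ := fun l => ∑ j, A i j * (if z j l = true then (1 : ℝ) else 0) with hr
  have horbi : ∀ l : ZMod T, z i (l + 1) = true ↔ θ i ≤ r l := fun l => horb i l
  -- Step A: rewrite the sum
  have key : ∑ j, (A i j * ∑ l : ZMod T,
        ((if z j (l + 1) = true then (1 : ℝ) else 0) - (if z j (l - 1) = true then (1 : ℝ) else 0)) *
          (if z i l = true then (1 : ℝ) else 0))
      = ∑ l : ZMod T, (r l - θ i) * (u (l - 1) - u (l + 1)) := by
    have h1 : ∑ j, (A i j * ∑ l : ZMod T,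
        ((if z j (l + 1) = true then (1 : ℝ) else 0) - (if z j (l - 1) = true then (1 : ℝ) else 0)) *
          (if z i l = true then (1 : ℝ) else 0))
        = ∑ l : ZMod T, (r (l + 1) - r (l - 1)) * u l := by
      simp_rw [Finset.mul_sum]
      rw [Finset.sum_comm]
      refine Finset.sum_congr rfl fun l _ => ?_
      rw [hr]
      simp only [← Finset.sum_sub_distrib, Finset.sum_mul]
      exact Finset.sum_congr rfl fun j _ => by ring
    have h2 : ∑ l : ZMod T, r (l + 1) * u l = ∑ l : ZMod T, r l * u (l - 1) :=
      Fintype.sum_equiv (Equiv.addRight (1 : ZMod T)) _ _ (fun x => by simp)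
    have h3 : ∑ l : ZMod T, r (l - 1) * u l = ∑ l : ZMod T, r l * u (l + 1) :=
      Fintype.sum_equiv (Equiv.subRight (1 : ZMod T)) _ _ (fun x => by simp)
    have h4a : ∑ l : ZMod T, u (l - 1) = ∑ l : ZMod T, u l :=
      Fintype.sum_equiv (Equiv.subRight (1 : ZMod T)) _ _ (fun x => by simp)
    have h4b : ∑ l : ZMod T, u (l + 1) = ∑ l : ZMod T, u l :=
      Fintype.sum_equiv (Equiv.addRight (1 : ZMod T)) _ _ (fun x => by simp)
    have h5 : ∑ l : ZMod T, (u (l - 1) - u (l + 1)) = 0 := by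
      rw [Finset.sum_sub_distrib, h4a, h4b, sub_self]
    calc ∑ j, (A i j * ∑ l : ZMod T,
        ((if z j (l + 1) = true then (1 : ℝ) else 0) - (if z j (l - 1) = true then (1 : ℝ) else 0)) *
          (if z i l = true then (1 : ℝ) else 0))
        = ∑ l : ZMod T, (r (l + 1) - r (l - 1)) * u l := h1
      _ = ∑ l : ZMod T, r (l + 1) * u l - ∑ l : ZMod T, r (l - 1) * u l := by
          rw [← Finset.sum_sub_distrib]; exact Finset.sum_congr rfl fun l _ => by ring
      _ = ∑ l : ZMod T, r l * u (l - 1) - ∑ l : ZMod T, r l * u (l + 1) := by rw [h2, h3]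
      _ = ∑ l : ZMod T, (r l * u (l - 1) - r l * u (l + 1)) := by rw [Finset.sum_sub_distrib]
      _ = ∑ l : ZMod T, ((r l - θ i) * (u (l - 1) - u (l + 1)) + θ i * (u (l - 1) - u (l + 1))) := by
          exact Finset.sum_congr rfl fun l _ => by ring
      _ = ∑ l : ZMod T, (r l - θ i) * (u (l - 1) - u (l + 1))
            + θ i * ∑ l : ZMod T, (u (l - 1) - u (l + 1)) := by
          rw [Finset.sum_add_distrib, Finset.mul_sum]
      _ = ∑ l : ZMod T, (r l - θ i) * (u (l - 1) - u (l + 1)) := by rw [h5]; ring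
  rw [key]
  -- Step B: each term is ≤ 0
  have hterm : ∀ l : ZMod T, (r l - θ i) * (u (l - 1) - u (l + 1)) ≤ 0 := by
    intro l
    rcases h1 : z i (l - 1) <;> rcases h2 : z i (l + 1)
    · simp [hu, h1, h2]
    · have hle : θ i ≤ r l := (horbi l).mp h2
      have e : (r l - θ i) * (u (l - 1) - u (l + 1)) = -(r l - θ i) := by
        simp [hu, h1, h2]
      rw [e]; linarith
    · have hlt : ¬ θ i ≤ r l := fun h => by simp [(horbi l).mpr h] at h2
      have e : (r l - θ i) * (u (l - 1) - u (l + 1)) = r l - θ i := by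
        simp [hu, h1, h2]
      rw [e]; linarith [lt_of_not_ge hlt]
    · simp [hu, h1, h2]
  -- Step C: find a strictly negative term
  have hex : ∃ m : ZMod T, z i m = true ∧ z i (m + 2) = false := by
    by_contra hc
    push_neg at hc
    have hmono : ∀ m : ZMod T, u m ≤ u (m + 2) := by
      intro m
      rcases h1 : z i m
      · simp only [hu, h1]; positivity
      · have h2 := hc m h1
        rcases h3 : z i (m + 2)
        · exact absurd h3 (by simp [h2])
        · simp [hu, h1, h3]
    have hsum : ∑ m : ZMod T, (u (m + 2) - u m) = 0 := by
      have h6 : ∑ m : ZMod T, u (m + 2) = ∑ m : ZMod T, u m :=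
        Fintype.sum_equiv (Equiv.addRight (2 : ZMod T)) _ _ (fun x => by simp)
      rw [Finset.sum_sub_distrib, h6, sub_self]
    have hall : ∀ m : ZMod T, u (m + 2) - u m = 0 := fun m =>
      (Finset.sum_eq_zero_iff_of_nonneg
        (fun m _ => sub_nonneg.mpr (hmono m))).mp hsum m (Finset.mem_univ m)
    apply hi
    intro l
    have h0 := hall l
    rcases h1 : z i l <;> rcases h2 : z i (l + 2) <;>
      first
        | rfl
        | (exfalso; simp [hu, h1, h2] at h0)
  obtain ⟨m, hm1, hm2⟩ := hex
  have hstrict : (r (m + 1) - θ i) * (u (m + 1 - 1) - u (m + 1 + 1)) < 0 := by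
    have e1 : m + 1 - 1 = m := by ring
    have e2 : m + 1 + 1 = m + 2 := by ring
    rw [e1, e2]
    have hneg : ¬ θ i ≤ r (m + 1) := fun h => by
      have h7 := (horbi (m + 1)).mpr h
      rw [e2] at h7
      simp [hm2] at h7
    have e : (r (m + 1) - θ i) * (u m - u (m + 2)) = r (m + 1) - θ i := by
      simp [hu, hm1, hm2]
    rw [e]
    linarith [lt_of_not_ge hneg]
  calc ∑ l : ZMod T, (r l - θ i) * (u (l - 1) - u (l + 1))
      < ∑ l : ZMod T, (0 : ℝ) :=
        Finset.sum_lt_sum (fun l _ => hterm l) ⟨m + 1, Finset.mem_univ _, hstrict⟩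
    _ = 0 := by simp
end
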